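/- arXiv:1608.00190 — 6 statements merged into one kernel-verified Lean document; each statement's English description precedes it below -/
import Mathlib

section
/- Let H be a Hilbert space and let E = K(H) ⊕ K(H) be the Hilbert K(H)-module with inner product ⟨(T₁, S₁), (T₂, S₂)⟩ = T₁*T₂ + S₁*S₂. Let φ = id : K(H) → B(H) be the inclusion, and let Φ : K(H) ⊕ 0 → B(H) be defined by Φ((T, 0)) = T, which is a φ-map. If Φ' : E → B(H) is any map satisfying Φ'((T₁, S₁))*Φ'((T₂, S₂)) = T₁*T₂ + S₁*S₂ for all T₁, T₂, S₁, S₂ ∈ K(H) and Φ'((T, 0)) = T for all T ∈ K(H), then Φ'((0, S)) = 0 for all S ∈ K(H). -/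
open ContinuousLinearMap in
lemma rankOne_isCompact {H : Type*} [NormedAddCommGroup H] [InnerProductSpace ℂ H]
    (v w : H) :
    IsCompactOperator ((toSpanSingleton ℂ w).comp (innerSL ℂ v)) := by
  have hid : IsCompactOperator (id : ℂ → ℂ) :=
    ⟨Metric.closedBall 0 1, isCompact_closedBall 0 1,
      Metric.closedBall_mem_nhds 0 one_pos⟩
  have h1 : IsCompactOperator (⇑(toSpanSingleton ℂ w)) := by
    simpa using hid.continuous_comp (toSpanSingleton ℂ w).continuous
  exact h1.comp_clm (innerSL ℂ v)

/-- **Example: forced vanishing on the second summand.**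
Let `E = K(H) ⊕ K(H)` be the Hilbert `K(H)`-module with inner product
`⟪(T₁, S₁), (T₂, S₂)⟫ = T₁* T₂ + S₁* S₂`, and view maps into `B(H)` with the
`B(H)`-valued inner product `⟪T, S⟫ = T* S`.  If `Φ' : E → B(H)` satisfies
`Φ'(T₁,S₁)* Φ'(T₂,S₂) = T₁* T₂ + S₁* S₂` for all compacts and `Φ'(T,0) = T`,
then `Φ'(0,S) = 0` for every compact `S`. -/
theorem phiMap_extension_vanishes_on_second_summand
    {H : Type*} [NormedAddCommGroup H] [InnerProductSpace ℂ H] [CompleteSpace H]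
    (Φ' : {T : H →L[ℂ] H // IsCompactOperator T} ×
          {T : H →L[ℂ] H // IsCompactOperator T} → (H →L[ℂ] H))
    (h1 : ∀ p q : {T : H →L[ℂ] H // IsCompactOperator T} ×
          {T : H →L[ℂ] H // IsCompactOperator T},
      star (Φ' p) * Φ' q = star p.1.val * q.1.val + star p.2.val * q.2.val)
    (h2 : ∀ T : {T : H →L[ℂ] H // IsCompactOperator T},
      Φ' (T, ⟨0, isCompactOperator_zero⟩) = T.val) :
    ∀ S : {T : H →L[ℂ] H // IsCompactOperator T},
      Φ' (⟨0, isCompactOperator_zero⟩, S) = 0 := by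
  intro S
  set x := Φ' (⟨0, isCompactOperator_zero⟩, S) with hx
  ext u
  set y := x u with hy
  set T : H →L[ℂ] H := (ContinuousLinearMap.toSpanSingleton ℂ y).comp (innerSL ℂ y) with hT
  have key : star T * x = 0 := by
    have := h1 (⟨T, rankOne_isCompact y y⟩, ⟨0, isCompactOperator_zero⟩)
      (⟨0, isCompactOperator_zero⟩, S)
    simpa [h2, ← hx] using this
  have hTy : star T y = 0 := by
    have := congrArg (fun A => A u) key
    simpa [ContinuousLinearMap.mul_apply, ← hy] using this
  have hinner : (inner ℂ y y : ℂ) * inner ℂ y y = 0 := by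
    have h0 : (inner ℂ (star T y) y : ℂ) = 0 := by rw [hTy]; simp
    rw [ContinuousLinearMap.star_eq_adjoint, ContinuousLinearMap.adjoint_inner_left] at h0
    simpa [hT, ContinuousLinearMap.toSpanSingleton_apply, inner_smul_right] using h0
  have : (inner ℂ y y : ℂ) = 0 := by
    rcases mul_eq_zero.mp hinner with h | h <;> exact h
  simpa [hy] using inner_self_eq_zero.mp this
end

section
/- Let H be a nonzero Hilbert space, E = K(H) ⊕ K(H) with inner product ⟨(T₁, S₁), (T₂, S₂)⟩ = T₁*T₂ + S₁*S₂, F = K(H) ⊕ 0, and φ = id : K(H) → B(H). Then the φ-map Φ : F → B(H), Φ((T, 0)) = T, has no extension to a φ-map on all of E; that is, there is no Φ' : E → B(H) with Φ'|_F = Φ and Φ'(x)*Φ'(y) = φ(⟨x, y⟩) for all x, y ∈ E. -/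
open scoped InnerProductSpace

lemma rankOne_compact {H : Type*} [NormedAddCommGroup H] [InnerProductSpace ℂ H]
    (v : H) :
    IsCompactOperator ((ContinuousLinearMap.toSpanSingleton ℂ v).comp
      (innerSL ℂ v) : H →L[ℂ] H) := by
  have hinner : IsCompactOperator (innerSL ℂ v : H →L[ℂ] ℂ) := by
    refine ⟨Metric.closedBall (0 : ℂ) ‖v‖, isCompact_closedBall _ _, ?_⟩
    refine Filter.mem_of_superset (Metric.closedBall_mem_nhds (0 : H) one_pos) ?_
    intro u hu
    simp only [Set.mem_preimage, Metric.mem_closedBall, dist_zero_right] at hu ⊢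
    calc ‖(innerSL ℂ v) u‖ ≤ ‖v‖ * ‖u‖ := norm_inner_le_norm v u
      _ ≤ ‖v‖ * 1 := mul_le_mul_of_nonneg_left hu (norm_nonneg v)
      _ = ‖v‖ := mul_one _
  exact hinner.continuous_comp (ContinuousLinearMap.toSpanSingleton ℂ v).continuous

/-- **A φ-map with no φ-map extension.**
For a nonzero Hilbert space `H`, let `E = K(H) ⊕ K(H)` with inner product
`⟪(T₁, S₁), (T₂, S₂)⟫ = T₁* T₂ + S₁* S₂`, `F = K(H) ⊕ 0`, and `φ = id : K(H) → B(H)`.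
The `φ`-map `Φ : F → B(H)`, `Φ(T, 0) = T`, has no extension to a `φ`-map on all of
`E`: there is no `Φ' : E → B(H)` with `Φ'(T, 0) = T` for all compact `T` and
`Φ'(x)* Φ'(y) = φ ⟪x, y⟫` for all `x, y ∈ E`. -/
theorem no_phiMap_extension_compact_example
    {H : Type*} [NormedAddCommGroup H] [InnerProductSpace ℂ H] [CompleteSpace H]
    [Nontrivial H] :
    ¬ ∃ Φ' : {T : H →L[ℂ] H // IsCompactOperator T} ×
             {T : H →L[ℂ] H // IsCompactOperator T} → (H →L[ℂ] H),
        (∀ T : {T : H →L[ℂ] H // IsCompactOperator T},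
          Φ' (T, ⟨0, isCompactOperator_zero⟩) = T.val) ∧
        (∀ p q : {T : H →L[ℂ] H // IsCompactOperator T} ×
             {T : H →L[ℂ] H // IsCompactOperator T},
          star (Φ' p) * Φ' q = star p.1.val * q.1.val + star p.2.val * q.2.val) := by
  rintro ⟨Φ', h1, h2⟩
  obtain ⟨v, hv⟩ := exists_ne (0 : H)
  -- rank-one operators `u ↦ ⟪w, u⟫ • w`
  set R : H → (H →L[ℂ] H) := fun w =>
    (ContinuousLinearMap.toSpanSingleton ℂ w).comp (innerSL ℂ w) with hR
  have hRapp : ∀ w u : H, R w u = (⟪w, u⟫_ℂ : ℂ) • w := by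
    intro w u
    simp [hR, ContinuousLinearMap.toSpanSingleton_apply]
  set S : {T : H →L[ℂ] H // IsCompactOperator T} := ⟨R v, rankOne_compact v⟩ with hS
  set zeroc : {T : H →L[ℂ] H // IsCompactOperator T} := ⟨0, isCompactOperator_zero⟩
  set X : H →L[ℂ] H := Φ' (zeroc, S) with hX
  -- For every compact T, star T * X = 0
  have key : ∀ T : {T : H →L[ℂ] H // IsCompactOperator T}, star T.val * X = 0 := by
    intro T
    have := h2 (T, zeroc) (zeroc, S)
    rw [h1 T] at this
    simpa [zeroc, X] using this
  -- hence X = 0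
  have hstar : star X = 0 := by
    ext w
    rcases eq_or_ne w 0 with rfl | hw
    · simp
    · have h1' : star X * R w = 0 := by
        have := congrArg star (key ⟨R w, rankOne_compact w⟩)
        simpa [star_mul] using this
      have h3 : star X (R w w) = 0 := by
        have := congrFun (congrArg DFunLike.coe h1') w
        simpa using this
      rw [hRapp, map_smul] at h3
      have hww : (⟪w, w⟫_ℂ : ℂ) ≠ 0 := by
        simpa [inner_self_eq_zero] using hw
      rcases smul_eq_zero.mp h3 with h | h
      · exact absurd h hww
      · simpa using h
  have hX0 : X = 0 := by
    have := congrArg star hstar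
    simpa using this
  -- now the inner product relation forces `R v = 0`
  have hmain := h2 (zeroc, S) (zeroc, S)
  rw [← hX, hX0] at hmain
  have hRv0 : R v = 0 := by
    have : star (R v) * R v = 0 := by
      have := hmain.symm
      simpa [zeroc, S] using this
    exact (CStarRing.star_mul_self_eq_zero_iff _).mp this
  have : R v v = 0 := by rw [hRv0]; simp
  rw [hRapp] at this
  have hvv : (⟪v, v⟫_ℂ : ℂ) ≠ 0 := by simpa [inner_self_eq_zero] using hv
  rcases smul_eq_zero.mp this with h | h
  · exact hvv h
  · exact hv h
end

section
/- Let A be a C*-algebra, E a right Hilbert A-module, F ⊆ E a closed submodule, H₁, H₂ Hilbert spaces, φ : A → B(H₁) a completely positive map, and Φ : F → B(H₁, H₂) a non-degenerate φ-map (i.e., the closed span of Φ(F)H₁ is H₂). If Φ admits an extension to a φ-map Ψ : E → B(H₁, H₂), then Ψ vanishes on F^⊥, i.e., Ψ(z) = 0 for all z ∈ F^⊥. -/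
open scoped ComplexOrder RightActions Matrix

/-- The `B(H₁)`-valued inner product `⟪T, S⟫ = T* S` on `B(H₁, H₂)`. -/
noncomputable def opInner {H₁ H₂ : Type*} [NormedAddCommGroup H₁] [InnerProductSpace ℂ H₁]
    [CompleteSpace H₁] [NormedAddCommGroup H₂] [InnerProductSpace ℂ H₂] [CompleteSpace H₂]
    (T S : H₁ →L[ℂ] H₂) : H₁ →L[ℂ] H₁ :=
  (ContinuousLinearMap.adjoint T).comp S

/-- A matrix over a (C*-)algebra is positive iff it factors as `Nᴴ * N`. -/
def MatIsPos {R : Type*} [NonUnitalSemiring R] [StarRing R] {n : ℕ}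
    (M : Matrix (Fin n) (Fin n) R) : Prop :=
  ∃ N : Matrix (Fin n) (Fin n) R, M = Nᴴ * N

/-- A linear map between C*-algebras is completely positive if all of its matrix
amplifications preserve positivity. -/
def IsCompletelyPositive {A B : Type*} [NonUnitalSemiring A] [StarRing A] [Module ℂ A]
    [NonUnitalSemiring B] [StarRing B] [Module ℂ B] (φ : A →ₗ[ℂ] B) : Prop :=
  ∀ (n : ℕ) (M : Matrix (Fin n) (Fin n) A), MatIsPos M → MatIsPos (M.map φ)

/-- The right Hilbert C⋆-module class as in the older Mathlib (`CStarModule` with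
`[SMul Aᵐᵒᵖ E]`); Mathlib's `CStarModule` now describes left modules. -/
class CStarModuleRight (A E : Type*) [NonUnitalSemiring A] [StarRing A] [Module ℂ A]
    [AddCommGroup E] [Module ℂ E] [PartialOrder A] [SMul Aᵐᵒᵖ E] [Norm A] [Norm E]
    extends Inner A E where
  inner_add_right {x} {y} {z} : inner x (y + z) = inner x y + inner x z
  inner_self_nonneg {x} : 0 ≤ inner x x
  inner_self {x} : inner x x = 0 ↔ x = 0
  inner_op_smul_right {a : A} {x y : E} : inner x (y <• a) = inner x y * a
  inner_smul_right_complex {z : ℂ} {x} {y} : inner x (z • y) = z • inner x y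
  star_inner x y : star (inner x y) = inner y x
  norm_eq_sqrt_norm_inner_self x : ‖x‖ = √‖inner x x‖

/-- **Lemma (i): a φ-map extension of a non-degenerate φ-map vanishes on `F^⊥`.**
If `Φ : F → B(H₁, H₂)` is a non-degenerate `φ`-map on a closed submodule `F` of a
Hilbert `A`-module `E` which extends to a `φ`-map `Ψ` on `E`, then `Ψ(z) = 0` for
every `z ∈ F^⊥`. -/
theorem phiMap_extension_vanishes_on_orthogonal_complement
    {A : Type*} [NonUnitalCStarAlgebra A] [PartialOrder A] [StarOrderedRing A]
    {E : Type*} [NormedAddCommGroup E] [NormedSpace ℂ E] [SMul Aᵐᵒᵖ E]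
    [CStarModuleRight A E] [CompleteSpace E]
    {H₁ H₂ : Type*} [NormedAddCommGroup H₁] [InnerProductSpace ℂ H₁] [CompleteSpace H₁]
    [NormedAddCommGroup H₂] [InnerProductSpace ℂ H₂] [CompleteSpace H₂]
    (F : Submodule ℂ E) (hFclosed : IsClosed (F : Set E))
    (hFmod : ∀ (a : A) (x : E), x ∈ F → x <• a ∈ F)
    (φ : A →ₗ[ℂ] (H₁ →L[ℂ] H₁)) (hφ : IsCompletelyPositive φ)
    (Φ : F → (H₁ →L[ℂ] H₂))
    (hΦmap : ∀ x y : F, opInner (Φ x) (Φ y) = φ (inner A (x : E) (y : E) : A))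
    (hnd : Dense (↑(Submodule.span ℂ {v : H₂ | ∃ (x : F) (h : H₁), v = Φ x h}) : Set H₂))
    (Ψ : E → (H₁ →L[ℂ] H₂))
    (hext : ∀ x : F, Ψ x = Φ x)
    (hΨmap : ∀ x y : E, opInner (Ψ x) (Ψ y) = φ (inner A x y : A)) :
    ∀ z : E, (∀ y ∈ F, (inner A z y : A) = 0) → Ψ z = 0 := by
  intro z hz
  ext h'
  simp only [ContinuousLinearMap.zero_apply]
  apply hnd.eq_zero_of_inner_right (𝕜 := ℂ)
  rintro v hv
  induction hv using Submodule.span_induction with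
  | mem v hv =>
    obtain ⟨x, h, rfl⟩ := hv
    rw [← ContinuousLinearMap.adjoint_inner_right]
    have key : opInner (Φ x) (Ψ z) = 0 := by
      rw [← hext x, hΨmap]
      have hx : (inner A (x : E) z : A) = 0 := by
        rw [← CStarModuleRight.star_inner, hz x.1 x.2, star_zero]
      rw [hx, map_zero]
    have : (ContinuousLinearMap.adjoint (Φ x)) (Ψ z h') = (opInner (Φ x) (Ψ z)) h' := rfl
    rw [this, key]
    simp
  | zero => simp
  | add u w _ _ hu hw => rw [inner_add_left, hu, hw, add_zero]
  | smul c u _ hu => rw [inner_smul_left, hu, mul_zero]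
end

section
/- Let A be a C*-algebra, E a right Hilbert A-module, F ⊆ E a closed submodule, φ : A → B(H₁) a completely positive map. If there exists a non-degenerate φ-map Φ : F → B(H₁, H₂) admitting a φ-map extension Ψ : E → B(H₁, H₂), then φ(⟨F^⊥, E⟩) = {0}, i.e., φ(⟨z, x⟩) = 0 for every z ∈ F^⊥ and x ∈ E. -/
open scoped ComplexOrder RightActions Matrix

/-- **Necessary condition for extendability.**
If some non-degenerate `φ`-map `Φ : F → B(H₁, H₂)` admits a `φ`-map extension
`Ψ : E → B(H₁, H₂)`, then `φ(⟪F^⊥, E⟫) = {0}`. -/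
theorem phi_vanishes_on_inner_orthogonal_of_extension
    {A : Type*} [NonUnitalCStarAlgebra A] [PartialOrder A] [StarOrderedRing A]
    {E : Type*} [NormedAddCommGroup E] [NormedSpace ℂ E] [SMul Aᵐᵒᵖ E]
    [CStarModuleRight A E] [CompleteSpace E]
    {H₁ H₂ : Type*} [NormedAddCommGroup H₁] [InnerProductSpace ℂ H₁] [CompleteSpace H₁]
    [NormedAddCommGroup H₂] [InnerProductSpace ℂ H₂] [CompleteSpace H₂]
    (F : Submodule ℂ E) (hFclosed : IsClosed (F : Set E))
    (hFmod : ∀ (a : A) (x : E), x ∈ F → x <• a ∈ F)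
    (φ : A →ₗ[ℂ] (H₁ →L[ℂ] H₁)) (hφ : IsCompletelyPositive φ)
    (Φ : F → (H₁ →L[ℂ] H₂))
    (hΦmap : ∀ x y : F, opInner (Φ x) (Φ y) = φ (inner A (x : E) (y : E) : A))
    (hnd : Dense (↑(Submodule.span ℂ {v : H₂ | ∃ (x : F) (h : H₁), v = Φ x h}) : Set H₂))
    (Ψ : E → (H₁ →L[ℂ] H₂))
    (hext : ∀ x : F, Ψ x = Φ x)
    (hΨmap : ∀ x y : E, opInner (Ψ x) (Ψ y) = φ (inner A x y : A)) :
    ∀ z : E, (∀ y ∈ F, (inner A z y : A) = 0) → ∀ x : E, φ (inner A z x : A) = 0 := by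
  intro z hz x
  set T := ContinuousLinearMap.adjoint (Ψ z) with hT
  have hT0 : T = 0 := by
    apply ContinuousLinearMap.ext_on hnd
    rintro v ⟨y, h, rfl⟩
    rw [← hext y]
    show (opInner (Ψ z) (Ψ (y : E))) h = _
    rw [hΨmap, hz y y.2, map_zero]
    rfl
  have : φ (inner A z x : A) = T.comp (Ψ x) := (hΨmap z x).symm
  rw [this, hT0]
  rfl
end

section
/- Let φ : A → B(H₁) be completely positive, F ⊆ E a closed submodule of a right Hilbert A-module, Φ : F → B(H₁, H₂) a non-degenerate φ-map. If Γ₁, Γ₂ : E → B(H₁, H₂) are both φ-maps extending Φ, then Γ₁ = Γ₂; i.e., a non-degenerate operator-valued φ-map has at most one φ-map extension to E. -/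
open scoped ComplexOrder RightActions Matrix

/-- **Uniqueness of φ-map extensions of non-degenerate φ-maps.**
If `Φ : F → B(H₁, H₂)` is a non-degenerate `φ`-map and `Γ₁, Γ₂ : E → B(H₁, H₂)`
are `φ`-maps both extending `Φ`, then `Γ₁ = Γ₂`. -/
theorem phiMap_extension_unique
    {A : Type*} [NonUnitalCStarAlgebra A] [PartialOrder A] [StarOrderedRing A]
    {E : Type*} [NormedAddCommGroup E] [NormedSpace ℂ E] [SMul Aᵐᵒᵖ E]
    [CStarModuleRight A E] [CompleteSpace E]
    {H₁ H₂ : Type*} [NormedAddCommGroup H₁] [InnerProductSpace ℂ H₁] [CompleteSpace H₁]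
    [NormedAddCommGroup H₂] [InnerProductSpace ℂ H₂] [CompleteSpace H₂]
    (F : Submodule ℂ E) (hFclosed : IsClosed (F : Set E))
    (hFmod : ∀ (a : A) (x : E), x ∈ F → x <• a ∈ F)
    (φ : A →ₗ[ℂ] (H₁ →L[ℂ] H₁)) (hφ : IsCompletelyPositive φ)
    (Φ : F → (H₁ →L[ℂ] H₂))
    (hΦmap : ∀ x y : F, opInner (Φ x) (Φ y) = φ (inner A (x : E) (y : E)))
    (hnd : Dense (↑(Submodule.span ℂ {v : H₂ | ∃ (x : F) (h : H₁), v = Φ x h}) : Set H₂))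
    (Γ₁ Γ₂ : E → (H₁ →L[ℂ] H₂))
    (hΓ₁ext : ∀ x : F, Γ₁ x = Φ x)
    (hΓ₁map : ∀ x y : E, opInner (Γ₁ x) (Γ₁ y) = φ (inner A x y))
    (hΓ₂ext : ∀ x : F, Γ₂ x = Φ x)
    (hΓ₂map : ∀ x y : E, opInner (Γ₂ x) (Γ₂ y) = φ (inner A x y)) :
    Γ₁ = Γ₂ := by
  funext x
  have key : ∀ y : F, (ContinuousLinearMap.adjoint (Φ y)).comp (Γ₁ x) =
      (ContinuousLinearMap.adjoint (Φ y)).comp (Γ₂ x) := by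
    intro y
    have h1 := hΓ₁map (y : E) x
    have h2 := hΓ₂map (y : E) x
    rw [hΓ₁ext] at h1
    rw [hΓ₂ext] at h2
    unfold opInner at h1 h2
    rw [h1, h2]
  ext h
  rw [← sub_eq_zero, ← ContinuousLinearMap.sub_apply]
  have hz : ((Γ₁ x - Γ₂ x) h) = 0 := by
    apply Dense.eq_zero_of_inner_left (𝕜 := ℂ) hnd
    rintro v hv
    induction hv using Submodule.span_induction with
    | mem v hv =>
      obtain ⟨y, h', rfl⟩ := hv
      rw [← ContinuousLinearMap.adjoint_inner_left]
      have : (ContinuousLinearMap.adjoint (Φ y)) ((Γ₁ x - Γ₂ x) h) = 0 := by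
        simp only [ContinuousLinearMap.sub_apply, map_sub]
        have := congrArg (fun T : H₁ →L[ℂ] H₁ => T h) (key y)
        simpa using sub_eq_zero_of_eq this
      rw [this, inner_zero_left]
    | zero => simp
    | add u v hu hv ihu ihv => rw [inner_add_right, ihu, ihv, add_zero]
    | smul c u hu ihu => rw [inner_smul_right, ihu, mul_zero]
  simpa using hz
end

section
/- Let H be a Hilbert space, E a right Hilbert K(H)-module, F a nontrivial closed submodule of E (with F^⊥ ≠ 0), and φ : K(H) → B(H₁) a nonzero completely positive map. Then no non-degenerate operator-valued φ-map Φ : F → B(H₁, H₂) admits a φ-map extension to E. -/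
open scoped ComplexOrder RightActions Matrix

/-- The December 2024 Mathlib `CStarModule` (right action via `SMul Aᵐᵒᵖ E`), restored
under a new name since Mathlib's `CStarModule` now uses a left `A`-action. -/
class CStarModuleOld (A E : Type*) [NonUnitalSemiring A] [StarRing A] [Module ℂ A]
    [AddCommGroup E] [Module ℂ E] [PartialOrder A] [SMul Aᵐᵒᵖ E] [Norm A] [Norm E]
    extends Inner A E where
  inner_add_right {x} {y} {z} : inner x (y + z) = inner x y + inner x z
  inner_self_nonneg {x} : 0 ≤ inner x x
  inner_self {x} : inner x x = 0 ↔ x = 0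
  inner_op_smul_right {a : A} {x y : E} : inner x (y <• a) = inner x y * a
  inner_smul_right_complex {z : ℂ} {x} {y} : inner x (z • y) = z • inner x y
  star_inner x y : star (inner x y) = inner y x
  norm_eq_sqrt_norm_inner_self x : ‖x‖ = √‖inner x x‖

/-! ### Auxiliary lemmas -/

section Aux

open scoped ComplexStarModule

variable {A B : Type*} [NonUnitalCStarAlgebra A] [PartialOrder A] [StarOrderedRing A]
  [NonUnitalCStarAlgebra B] [PartialOrder B] [StarOrderedRing B]

/-- A completely positive map is positive. -/
lemma IsCompletelyPositive.pos_aux (φ : A →ₗ[ℂ] B) (hφ : IsCompletelyPositive φ) {a : A}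
    (ha : 0 ≤ a) : 0 ≤ φ a := by
  obtain ⟨b, hb⟩ : ∃ b : A, a = star b * b :=
    ⟨CFC.sqrt a, by rw [(IsSelfAdjoint.of_nonneg (CFC.sqrt_nonneg _)).star_eq,
      CFC.sqrt_mul_sqrt_self a ha]⟩
  have hM : MatIsPos (Matrix.of (fun _ _ => a) : Matrix (Fin 1) (Fin 1) A) := by
    refine ⟨Matrix.of fun _ _ => b, ?_⟩
    ext i j
    simp [Matrix.mul_apply, hb]
  obtain ⟨N, hN⟩ := hφ 1 _ hM
  have h00 : φ a = (Nᴴ * N) 0 0 := by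
    have := congrFun (congrFun hN 0) 0
    simpa [Matrix.map_apply] using this
  rw [h00, Matrix.mul_apply]
  simpa using star_mul_self_nonneg (N 0 0)

lemma norm_posPart_le_aux (s : A) (hs : IsSelfAdjoint s) : ‖s⁺‖ ≤ ‖s‖ := by
  have h1 : ‖s⁺‖ ≤ ‖s⁺ + s⁻‖ :=
    CStarAlgebra.norm_le_norm_of_nonneg_of_le (CFC.posPart_nonneg s)
      (le_add_of_nonneg_right (CFC.negPart_nonneg s))
  have htsa : IsSelfAdjoint (s⁺ + s⁻) :=
    ((CFC.posPart_nonneg s).isSelfAdjoint).add ((CFC.negPart_nonneg s).isSelfAdjoint)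
  set p := s⁺ with hp
  set n := s⁻ with hn
  have h3 : p * n = 0 := CFC.posPart_mul_negPart s
  have h4 : n * p = 0 := CFC.negPart_mul_posPart s
  have h5 : p - n = s := CFC.posPart_sub_negPart s hs
  have htt : (p + n) * (p + n) = s * s := by
    rw [← h5, add_mul, mul_add, mul_add, sub_mul, mul_sub, mul_sub, h3, h4]
    abel
  have e1 : ‖p + n‖ * ‖p + n‖ = ‖s‖ * ‖s‖ := by
    calc ‖p + n‖ * ‖p + n‖ = ‖star (p + n) * (p + n)‖ :=
          (CStarRing.norm_star_mul_self).symm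
      _ = ‖star s * s‖ := by rw [htsa.star_eq, htt]; conv_rhs => rw [hs.star_eq]
      _ = ‖s‖ * ‖s‖ := CStarRing.norm_star_mul_self
  have e2 : ‖p + n‖ = ‖s‖ := by
    have := congrArg Real.sqrt e1
    rwa [Real.sqrt_mul_self (norm_nonneg _), Real.sqrt_mul_self (norm_nonneg _)] at this
  linarith

lemma norm_negPart_le_aux (s : A) (hs : IsSelfAdjoint s) : ‖s⁻‖ ≤ ‖s‖ := by
  have := norm_posPart_le_aux (-s) hs.neg
  rwa [CFC.posPart_neg, norm_neg] at this

/-- A positive linear map between C*-algebras is bounded. -/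
lemma pos_map_bound_aux (φ : A →ₗ[ℂ] B) (hpos : ∀ a : A, 0 ≤ a → 0 ≤ φ a) :
    ∃ M : ℝ, 0 ≤ M ∧ ∀ a : A, ‖φ a‖ ≤ M * ‖a‖ := by
  have hmono : ∀ a b : A, a ≤ b → φ a ≤ φ b := by
    intro a b hab
    have := hpos _ (sub_nonneg.mpr hab)
    rw [map_sub] at this
    exact sub_nonneg.mp this
  -- step 1 : uniform bound on the positive unit ball
  obtain ⟨C, hC0, hC⟩ : ∃ C : ℝ, 0 ≤ C ∧ ∀ a : A, 0 ≤ a → ‖a‖ ≤ 1 → ‖φ a‖ ≤ C := by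
    by_contra h
    push_neg at h
    choose f hf1 hf2 hf3 using fun n : ℕ => h ((4 : ℝ) ^ n) (by positivity)
    set g : ℕ → A := fun n => ((2 : ℝ)⁻¹) ^ n • f n with hg
    have hgpos : ∀ n, 0 ≤ g n := fun n => smul_nonneg (by positivity) (hf1 n)
    have hgnorm : ∀ n, ‖g n‖ ≤ (2⁻¹ : ℝ) ^ n := by
      intro n
      rw [hg, norm_smul]
      calc ‖((2:ℝ)⁻¹) ^ n‖ * ‖f n‖ ≤ ‖((2:ℝ)⁻¹) ^ n‖ * 1 := by
            gcongr; exact hf2 n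
        _ ≤ (2⁻¹:ℝ)^n := by
            rw [mul_one, Real.norm_eq_abs, abs_pow, abs_of_pos (by norm_num : (0:ℝ) < 2⁻¹)]
    have hsum : Summable g :=
      Summable.of_norm_bounded
        (summable_geometric_of_lt_one (by norm_num) (by norm_num)) hgnorm
    set a := ∑' n, g n with ha
    have hle : ∀ n, g n ≤ a := by
      intro n
      have h1 : a - g n = ∑' m, (if m = n then 0 else g m) := by
        rw [ha, Summable.tsum_eq_add_tsum_ite hsum n]; abel
      have h2 : 0 ≤ a - g n := by
        rw [h1]
        refine tsum_nonneg fun m => ?_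
        by_cases hm : m = n <;> simp [hm, hgpos m]
      exact sub_nonneg.mp h2
    have hkey : ∀ n : ℕ, (2:ℝ)^n < ‖φ a‖ := by
      intro n
      have hb1 : 0 ≤ φ (g n) := hpos _ (hgpos n)
      have hb2 : φ (g n) ≤ φ a := hmono _ _ (hle n)
      have hb3 : ‖φ (g n)‖ ≤ ‖φ a‖ := CStarAlgebra.norm_le_norm_of_nonneg_of_le hb1 hb2
      have hφg : ‖φ (g n)‖ = (2⁻¹:ℝ)^n * ‖φ (f n)‖ := by
        have : φ (g n) = ((2:ℝ)⁻¹)^n • φ (f n) := by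
          rw [hg]
          simp only [← Complex.coe_smul]
          push_cast
          rw [map_smul]
        rw [this, norm_smul, Real.norm_eq_abs, abs_pow,
          abs_of_pos (by norm_num : (0:ℝ) < 2⁻¹)]
      have h4 : (2:ℝ)^n < (2⁻¹:ℝ)^n * ‖φ (f n)‖ := by
        have := hf3 n
        have h5 : (2⁻¹:ℝ)^n * ((4:ℝ)^n) < (2⁻¹:ℝ)^n * ‖φ (f n)‖ := by
          have hp : (0:ℝ) < (2⁻¹:ℝ)^n := by positivity
          exact (mul_lt_mul_iff_right₀ hp).mpr this
        calc (2:ℝ)^n = (2⁻¹:ℝ)^n * (4:ℝ)^n := by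
              rw [← mul_pow]; norm_num
          _ < _ := h5
      linarith [hφg ▸ h4, hb3]
    obtain ⟨n, hn⟩ := pow_unbounded_of_one_lt (‖φ a‖) (by norm_num : (1:ℝ) < 2)
    exact absurd (hkey n) (not_lt.mpr hn.le)
  -- step 2 : bound on all positives
  have hCpos : ∀ a : A, 0 ≤ a → ‖φ a‖ ≤ C * ‖a‖ := by
    intro a hA
    rcases eq_or_ne a 0 with rfl | hne
    · simp
    · have hna : 0 < ‖a‖ := norm_pos_iff.mpr hne
      have hb : 0 ≤ (‖a‖⁻¹ : ℝ) • a := smul_nonneg (by positivity) hA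
      have hbn : ‖(‖a‖⁻¹ : ℝ) • a‖ ≤ 1 := by
        rw [norm_smul, Real.norm_eq_abs, abs_of_pos (by positivity)]
        rw [inv_mul_cancel₀ hna.ne']
      have := hC _ hb hbn
      have hφb : φ ((‖a‖⁻¹ : ℝ) • a) = (‖a‖⁻¹ : ℝ) • φ a := by
        simp only [← Complex.coe_smul, map_smul]
      rw [hφb, norm_smul, Real.norm_eq_abs, abs_of_pos (by positivity)] at this
      calc ‖φ a‖ = ‖a‖ * (‖a‖⁻¹ * ‖φ a‖) := by field_simp
        _ ≤ ‖a‖ * C := by gcongr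
        _ = C * ‖a‖ := mul_comm _ _
  -- step 3 : general bound
  refine ⟨4 * C, by positivity, fun a => ?_⟩
  have hdecomp := CStarAlgebra.linear_combination_nonneg a
  set p1 := ((ℜ a : A))⁺; set p2 := ((ℜ a : A))⁻
  set p3 := ((ℑ a : A))⁺; set p4 := ((ℑ a : A))⁻
  have hφa : φ a = φ p1 - φ p2 + Complex.I • (φ p3 - φ p4) := by
    rw [← hdecomp]
    simp only [map_add, map_sub, map_smul, smul_sub]
  have hre : ‖(ℜ a : A)‖ ≤ ‖a‖ := by
    rw [realPart_apply_coe, norm_smul, Real.norm_eq_abs]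
    calc |(2:ℝ)⁻¹| * ‖a + star a‖ ≤ |(2:ℝ)⁻¹| * (‖a‖ + ‖star a‖) := by
          gcongr; exact norm_add_le _ _
      _ ≤ ‖a‖ := by rw [norm_star]; rw [abs_of_pos (by norm_num)]; linarith
  have him : ‖(ℑ a : A)‖ ≤ ‖a‖ := by
    rw [imaginaryPart_apply_coe, norm_smul, norm_smul, Real.norm_eq_abs]
    simp only [norm_neg, Complex.norm_I]
    calc 1 * (|(2:ℝ)⁻¹| * ‖a - star a‖) ≤ 1 * (|(2:ℝ)⁻¹| * (‖a‖ + ‖star a‖)) := by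
          gcongr; exact norm_sub_le _ _
      _ ≤ ‖a‖ := by rw [norm_star]; rw [abs_of_pos (by norm_num)]; linarith
  have h1 : ‖φ p1‖ ≤ C * ‖a‖ :=
    (hCpos _ (CFC.posPart_nonneg _)).trans
      (by have := (norm_posPart_le_aux (ℜ a : A) (ℜ a).2).trans hre; gcongr)
  have h2 : ‖φ p2‖ ≤ C * ‖a‖ :=
    (hCpos _ (CFC.negPart_nonneg _)).trans
      (by have := (norm_negPart_le_aux (ℜ a : A) (ℜ a).2).trans hre; gcongr)
  have h3 : ‖φ p3‖ ≤ C * ‖a‖ :=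
    (hCpos _ (CFC.posPart_nonneg _)).trans
      (by have := (norm_posPart_le_aux (ℑ a : A) (ℑ a).2).trans him; gcongr)
  have h4 : ‖φ p4‖ ≤ C * ‖a‖ :=
    (hCpos _ (CFC.negPart_nonneg _)).trans
      (by have := (norm_negPart_le_aux (ℑ a : A) (ℑ a).2).trans him; gcongr)
  calc ‖φ a‖ ≤ ‖φ p1‖ + ‖φ p2‖ + (‖φ p3‖ + ‖φ p4‖) := by
        rw [hφa]
        refine (norm_add_le _ _).trans ?_
        gcongr
        · exact norm_sub_le _ _
        · rw [norm_smul, Complex.norm_I, one_mul]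
          exact norm_sub_le _ _
    _ ≤ C * ‖a‖ + C * ‖a‖ + (C * ‖a‖ + C * ‖a‖) := by gcongr
    _ = 4 * C * ‖a‖ := by ring

end Aux

/-! ### Rank one operators and approximation of compact operators -/

open ContinuousLinearMap in
/-- The rank one operator `x ↦ ⟪w, x⟫ • u`. -/
noncomputable def rk1 {H : Type*} [NormedAddCommGroup H] [InnerProductSpace ℂ H]
    (u w : H) : H →L[ℂ] H :=
  (toSpanSingleton ℂ u).comp (innerSL ℂ w)

section RankOne

variable {H : Type*} [NormedAddCommGroup H] [InnerProductSpace ℂ H]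

lemma rk1_apply (u w x : H) : rk1 u w x = (inner ℂ w x : ℂ) • u := rfl

lemma rk1_compact (u w : H) : IsCompactOperator ⇑(rk1 u w) := by
  have h : IsCompactOperator ⇑(ContinuousLinearMap.toSpanSingleton ℂ u) := by
    refine ⟨ContinuousLinearMap.toSpanSingleton ℂ u '' Metric.closedBall 0 1,
      (isCompact_closedBall _ _).image (map_continuous _), ?_⟩
    exact Filter.mem_of_superset (Metric.closedBall_mem_nhds 0 one_pos)
      (Set.subset_preimage_image _ _)
  have := h.comp_clm (innerSL ℂ w)
  rwa [show (⇑(ContinuousLinearMap.toSpanSingleton ℂ u)) ∘ (⇑(innerSL ℂ w))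
    = ⇑(rk1 u w) from rfl] at this

variable [CompleteSpace H]

/-- Every compact operator on a Hilbert space is approximated in norm by finite sums
of rank one operators. -/
lemma compact_approx (T : H →L[ℂ] H) (hT : IsCompactOperator ⇑T) {ε : ℝ} (hε : 0 < ε) :
    ∃ (n : ℕ) (u w : Fin n → H), ‖T - ∑ i, rk1 (u i) (w i)‖ ≤ ε := by
  have hK : IsCompact (closure (⇑T '' Metric.closedBall 0 1)) :=
    hT.isCompact_closure_image_closedBall 1
  have htb : TotallyBounded (⇑T '' Metric.closedBall 0 1) :=
    (hK.totallyBounded).subset subset_closure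
  obtain ⟨t, htfin, hcover⟩ := (Metric.totallyBounded_iff.mp htb) ε hε
  set U : Submodule ℂ H := Submodule.span ℂ t with hU
  haveI : FiniteDimensional ℂ U := FiniteDimensional.span_of_finite ℂ htfin
  haveI : CompleteSpace U := FiniteDimensional.complete ℂ U
  set b := stdOrthonormalBasis ℂ U
  set n := Module.finrank ℂ U
  set Q : H →L[ℂ] H := U.subtypeL.comp (U.orthogonalProjectionOnto) with hQ
  refine ⟨n, fun i => (b i : H), fun i => ContinuousLinearMap.adjoint T (b i), ?_⟩
  have hQT : Q.comp T = ∑ i, rk1 ((b i : H)) (ContinuousLinearMap.adjoint T (b i)) := by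
    ext x
    have h1 : U.orthogonalProjectionOnto (T x) = ∑ i, (inner ℂ ((b i : H)) (T x) : ℂ) • b i :=
      b.orthogonalProjectionOnto_apply_eq_sum (T x)
    have h2 : (Q.comp T) x = ((U.orthogonalProjectionOnto (T x) : U) : H) := rfl
    rw [h2, h1]
    push_cast
    simp only [ContinuousLinearMap.coe_sum', Finset.sum_apply, rk1_apply,
      ContinuousLinearMap.adjoint_inner_left]
  have hnorm : ‖T - Q.comp T‖ ≤ ε := by
    refine ContinuousLinearMap.opNorm_le_bound _ hε.le fun x => ?_
    rcases eq_or_ne x 0 with rfl | hx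
    · simp
    · have hnx : 0 < ‖x‖ := norm_pos_iff.mpr hx
      set x' : H := (‖x‖⁻¹ : ℝ) • x with hx'
      have hx'1 : x' ∈ Metric.closedBall (0:H) 1 := by
        simp only [Metric.mem_closedBall, dist_zero_right, hx', norm_smul,
          Real.norm_eq_abs, abs_of_pos (by positivity : (0:ℝ) < ‖x‖⁻¹)]
        rw [inv_mul_cancel₀ hnx.ne']
      obtain ⟨y, hy, hby⟩ : ∃ y ∈ t, T x' ∈ Metric.ball y ε := by
        have := hcover (Set.mem_image_of_mem _ hx'1)
        simpa using this
      have hyU : y ∈ U := Submodule.subset_span hy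
      have hmin : ‖T x' - ((U.orthogonalProjectionOnto (T x') : U) : H)‖ ≤ ‖T x' - y‖ := by
        rw [← U.starProjection_apply, Submodule.starProjection_minimal]
        exact ciInf_le ⟨0, by rintro r ⟨v, rfl⟩; exact norm_nonneg _⟩ (⟨y, hyU⟩ : U)
      have hsmall : ‖(T - Q.comp T) x'‖ ≤ ε := by
        have : (T - Q.comp T) x' = T x' - ((U.orthogonalProjectionOnto (T x') : U) : H) := rfl
        rw [this]
        exact hmin.trans (le_of_lt (by simpa [dist_eq_norm] using hby))
      have hlin : (T - Q.comp T) x = (‖x‖ : ℝ) • ((T - Q.comp T) x') := by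
        rw [hx', ContinuousLinearMap.map_smul_of_tower, smul_smul]
        rw [mul_inv_cancel₀ hnx.ne', one_smul]
      rw [hlin, norm_smul, Real.norm_eq_abs, abs_of_pos hnx, mul_comm]
      exact mul_le_mul_of_nonneg_right hsmall hnx.le |>.trans (by rw [mul_comm])
  have hfin := hnorm
  rw [hQT] at hfin
  simpa using hfin

end RankOne

section OldAux

variable {A E : Type*} [NonUnitalCStarAlgebra A] [PartialOrder A] [StarOrderedRing A]
  [NormedAddCommGroup E] [NormedSpace ℂ E] [SMul Aᵐᵒᵖ E] [CStarModuleOld A E]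

lemma CStarModuleOld.inner_op_smul_left' {a : A} {x y : E} :
    inner A (x <• a) y = star a * inner A x y := by
  rw [← CStarModuleOld.star_inner y (x <• a), CStarModuleOld.inner_op_smul_right, star_mul,
    CStarModuleOld.star_inner]

lemma CStarModuleOld.norm_sq_eq' {x : E} : ‖x‖ ^ 2 = ‖(inner A x x : A)‖ := by
  rw [CStarModuleOld.norm_eq_sqrt_norm_inner_self (A := A) x, Real.sq_sqrt (norm_nonneg _)]

end OldAux

/-- **Corollary: no φ-map over `K(H)` extends.**
If `A ≅ K(H)`, `F` is a nontrivial closed submodule of a Hilbert `A`-module `E`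
with `F^⊥ ≠ 0`, and `φ : A → B(H₁)` is a nonzero completely positive map, then no
non-degenerate `φ`-map `Φ : F → B(H₁, H₂)` admits a `φ`-map extension to `E`. -/
theorem no_phiMap_extension_over_compacts
    {A : Type*} [NonUnitalCStarAlgebra A] [PartialOrder A] [StarOrderedRing A]
    {H : Type*} [NormedAddCommGroup H] [InnerProductSpace ℂ H] [CompleteSpace H]
    (π : A →⋆ₙₐ[ℂ] (H →L[ℂ] H)) (hπiso : Isometry π)
    (hπrange : ∀ T : H →L[ℂ] H, IsCompactOperator T ↔ ∃ a : A, π a = T)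
    {E : Type*} [NormedAddCommGroup E] [NormedSpace ℂ E] [SMul Aᵐᵒᵖ E]
    [CStarModuleOld A E] [CompleteSpace E]
    (F : Submodule ℂ E) (hFclosed : IsClosed (F : Set E))
    (hFmod : ∀ (a : A) (x : E), x ∈ F → x <• a ∈ F)
    (hFne : F ≠ ⊥) (hFproper : F ≠ ⊤)
    (hFperpne : ∃ z : E, z ≠ 0 ∧ ∀ y ∈ F, (inner A z y : A) = 0)
    {H₁ H₂ : Type*} [NormedAddCommGroup H₁] [InnerProductSpace ℂ H₁] [CompleteSpace H₁]
    [NormedAddCommGroup H₂] [InnerProductSpace ℂ H₂] [CompleteSpace H₂]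
    (φ : A →ₗ[ℂ] (H₁ →L[ℂ] H₁)) (hφ : IsCompletelyPositive φ) (hφne : φ ≠ 0)
    (Φ : F → (H₁ →L[ℂ] H₂))
    (hΦmap : ∀ x y : F, opInner (Φ x) (Φ y) = φ (inner A (x : E) (y : E) : A))
    (hnd : Dense (↑(Submodule.span ℂ {v : H₂ | ∃ (x : F) (h : H₁), v = Φ x h}) : Set H₂)) :
    ¬ ∃ Ψ : E → (H₁ →L[ℂ] H₂),
        (∀ x : F, Ψ x = Φ x) ∧
        (∀ x y : E, opInner (Ψ x) (Ψ y) = φ (inner A x y : A)) := by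
  rintro ⟨Ψ, hext, hΨ⟩
  obtain ⟨z, hz0, hzF⟩ := hFperpne
  -- the orthogonal complement of `F`
  set Perp : E → Prop := fun w => ∀ y ∈ F, (inner A w y : A) = 0 with hPerp
  have hPz : Perp z := hzF
  have hPsmul : ∀ w, Perp w → ∀ a : A, Perp (w <• a) := by
    intro w hw a y hy
    rw [CStarModuleOld.inner_op_smul_left', hw y hy, mul_zero]
  -- any Ψ vanishes on `Perp`
  have hΨperp : ∀ w, Perp w → Ψ w = 0 := by
    intro w hw
    set T : H₂ →L[ℂ] H₁ := ContinuousLinearMap.adjoint (Ψ w) with hT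
    have hT0 : ∀ v ∈ {v : H₂ | ∃ (x : F) (h : H₁), v = Φ x h}, T v = 0 := by
      rintro v ⟨x, h, rfl⟩
      have h1 : opInner (Ψ w) (Ψ (x : E)) = φ ((inner A w (x : E) : A)) := hΨ w x
      rw [hext x, hw (x : E) x.2, map_zero] at h1
      have : T (Φ x h) = (opInner (Ψ w) (Φ x)) h := rfl
      rw [this, h1]
      rfl
    have hspan : ∀ v ∈ (Submodule.span ℂ {v : H₂ | ∃ (x : F) (h : H₁), v = Φ x h} : Set H₂),
        T v = 0 := by
      intro v hv
      have hle : Submodule.span ℂ {v : H₂ | ∃ (x : F) (h : H₁), v = Φ x h}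
          ≤ LinearMap.ker (T : H₂ →ₗ[ℂ] H₁) := by
        rw [Submodule.span_le]
        intro v hv
        exact LinearMap.mem_ker.mpr (hT0 v hv)
      exact LinearMap.mem_ker.mp (hle hv)
    have hTzero : (⇑T : H₂ → H₁) = 0 :=
      Continuous.ext_on hnd T.continuous continuous_const hspan
    have hT' : T = 0 := ContinuousLinearMap.ext fun v => congrFun hTzero v
    have := congrArg ContinuousLinearMap.adjoint hT'
    rwa [ContinuousLinearMap.adjoint_adjoint, map_zero] at this
  -- φ kills all inner products against `Perp`
  have hker : ∀ (x : E) (w : E), Perp w → φ ((inner A x w : A)) = 0 := by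
    intro x w hw
    have h1 := hΨ x w
    rw [hΨperp w hw] at h1
    have : opInner (Ψ x) (0 : H₁ →L[ℂ] H₂) = 0 := ContinuousLinearMap.comp_zero _
    rw [this] at h1
    exact h1.symm
  set c : A := (inner A z z : A) with hc
  have hc0 : c ≠ 0 := by
    intro hcz
    have h2 : ‖z‖ ^ 2 = 0 := by
      rw [CStarModuleOld.norm_sq_eq' (A := A), ← hc, hcz, norm_zero]
    exact hz0 (norm_eq_zero.mp ((pow_eq_zero_iff two_ne_zero).mp h2))
  have hkill : ∀ s t : A, φ (s * c * t) = 0 := by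
    intro s t
    have hform : s * c * t = (inner A (z <• star s) (z <• t) : A) := by
      rw [CStarModuleOld.inner_op_smul_left', CStarModuleOld.inner_op_smul_right, star_star, hc,
        mul_assoc]
    rw [hform]
    exact hker _ _ (hPsmul z hPz t)
  -- the image of `c` and a vector it does not kill
  set C : H →L[ℂ] H := π c with hC
  have hC0 : C ≠ 0 := by
    intro h
    apply hc0
    have : π c = π 0 := by rw [map_zero]; exact h
    exact hπiso.injective this
  obtain ⟨v, hv⟩ : ∃ v : H, C v ≠ 0 := by
    by_contra h
    push_neg at h
    exact hC0 (ContinuousLinearMap.ext fun v => by rw [h v]; rfl)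
  -- every rank one operator is `π` of an element killed by `φ`
  have hrk1 : ∀ u w : H, ∃ d : A, φ d = 0 ∧ π d = rk1 u w := by
    intro u w
    obtain ⟨s, hs⟩ := (hπrange _).mp (rk1_compact u ((((‖C v‖ : ℂ)^2)⁻¹ : ℂ) • (C v)))
    obtain ⟨t, ht⟩ := (hπrange _).mp (rk1_compact v w)
    refine ⟨s * c * t, hkill s t, ?_⟩
    have hmul : π (s * c * t) = (π s) * C * (π t) := by
      rw [map_mul, map_mul, hC]
    rw [hmul, hs, ht]
    ext x
    have h1 : ((rk1 u ((((‖C v‖ : ℂ)^2)⁻¹ : ℂ) • (C v))) * C * (rk1 v w)) x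
        = rk1 u ((((‖C v‖ : ℂ)^2)⁻¹ : ℂ) • (C v)) (C (rk1 v w x)) := rfl
    rw [h1, rk1_apply, rk1_apply, map_smul, rk1_apply]
    rw [inner_smul_left, inner_smul_right]
    rw [inner_self_eq_norm_sq_to_K (𝕜 := ℂ)]
    have hCv : ((‖C v‖ : ℂ))^2 ≠ 0 := by
      simp only [ne_eq, pow_eq_zero_iff, OfNat.ofNat_ne_zero, not_false_eq_true,
        Complex.ofReal_eq_zero, norm_eq_zero]
      intro h; exact hv h
    congr 1
    have hconj : (starRingEnd ℂ) ((((‖C v‖ : ℂ)^2)⁻¹ : ℂ)) = (((‖C v‖ : ℂ)^2)⁻¹ : ℂ) := by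
      rw [map_inv₀, ← Complex.ofReal_pow, Complex.conj_ofReal, Complex.ofReal_pow]
    rw [hconj]
    field_simp
    exact mul_comm _ _
  -- extract a point where φ is nonzero, and the bound for φ
  obtain ⟨a₀, ha₀⟩ : ∃ a₀ : A, φ a₀ ≠ 0 := by
    by_contra h
    push_neg at h
    exact hφne (LinearMap.ext fun a => by rw [h a]; rfl)
  obtain ⟨M, hM0, hM⟩ := pos_map_bound_aux φ
    (fun a ha => IsCompletelyPositive.pos_aux φ hφ ha)
  have hsmall : ∀ ε : ℝ, 0 < ε → ‖φ a₀‖ ≤ ε := by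
    intro ε hε
    have hδ : 0 < ε / (M + 1) := by positivity
    have hTc : IsCompactOperator ⇑(π a₀) := (hπrange (π a₀)).mpr ⟨a₀, rfl⟩
    obtain ⟨n, u, w, hn⟩ := compact_approx (π a₀) hTc hδ
    choose d hd1 hd2 using fun i : Fin n => hrk1 (u i) (w i)
    set D := ∑ i, d i with hD
    have hφD : φ D = 0 := by
      rw [hD, map_sum]
      exact Finset.sum_eq_zero fun i _ => hd1 i
    have hπD : π D = ∑ i, rk1 (u i) (w i) := by
      rw [hD, map_sum]
      exact Finset.sum_congr rfl fun i _ => hd2 i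
    have hdist : ‖a₀ - D‖ ≤ ε / (M + 1) := by
      have heq : ‖a₀ - D‖ = ‖π a₀ - π D‖ := by
        calc ‖a₀ - D‖ = dist a₀ D := (dist_eq_norm _ _).symm
          _ = dist (π a₀) (π D) := (hπiso.dist_eq _ _).symm
          _ = ‖π a₀ - π D‖ := dist_eq_norm _ _
      rw [heq, hπD]
      exact hn
    calc ‖φ a₀‖ = ‖φ (a₀ - D)‖ := by rw [map_sub, hφD, sub_zero]
      _ ≤ M * ‖a₀ - D‖ := hM _
      _ ≤ M * (ε / (M + 1)) := by gcongr
      _ ≤ (M + 1) * (ε / (M + 1)) := by gcongr; linarith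
      _ = ε := by field_simp
  have hpos : 0 < ‖φ a₀‖ := norm_pos_iff.mpr ha₀
  linarith [hsmall (‖φ a₀‖ / 2) (by linarith)]
end
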